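/- Let ∑_{i=1}^n aᵢxᵢ = 0 with all aᵢ ≠ 0 and gcd(a₁, ..., aₙ) = 1, and let x_i = ∑_{j=1}^{n-1} c_{ij}k_j be a general integer solution. Then for every row index i, gcd(c_{i1}, ..., c_{i,n-1}) = gcd(a₁, ..., a_{i-1}, a_{i+1}, ..., aₙ) up to sign (they are associates). -/

import Mathlib

lemma exists_gcd_sum {ι : Type*} [DecidableEq ι] (s : Finset ι) (f : ι → ℤ) :
    ∃ c : ι → ℤ, s.gcd f = ∑ j ∈ s, c j * f j := by
  induction s using Finset.induction_on with
  | empty => exact ⟨0, by simp⟩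
  | @insert a s hna ih =>
    obtain ⟨c, hc⟩ := ih
    set G := s.gcd f with hG
    set A := Int.gcdA (f a) G with hA
    set B := Int.gcdB (f a) G with hB
    refine ⟨fun j => if j = a then A else B * c j, ?_⟩
    rw [Finset.gcd_insert, Finset.sum_insert hna]
    simp only []
    rw [if_true]
    have hcoe : GCDMonoid.gcd (f a) G = (↑(Int.gcd (f a) G) : ℤ) := rfl
    have h1 : GCDMonoid.gcd (f a) G = f a * A + G * B := by
      rw [hcoe, Int.gcd_eq_gcd_ab, hA, hB]
    have h2 : ∑ j ∈ s, (if j = a then A else B * c j) * f j = G * B := by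
      calc ∑ j ∈ s, (if j = a then A else B * c j) * f j
          = ∑ j ∈ s, B * (c j * f j) := Finset.sum_congr rfl fun j hj => by
            rw [if_neg (ne_of_mem_of_not_mem hj hna)]; ring
        _ = B * ∑ j ∈ s, c j * f j := (Finset.mul_sum _ _ _).symm
        _ = G * B := by rw [← hc]; ring
    rw [h1, h2]
    ring

theorem stmt_7 (n : ℕ) (a : Fin n → ℤ) (ha : ∀ i, a i ≠ 0)
    (hgcd : Finset.univ.gcd a = 1)
    (C : Matrix (Fin n) (Fin (n - 1)) ℤ)
    (hsol : ∀ k : Fin (n - 1) → ℤ, ∑ i, a i * (C.mulVec k) i = 0)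
    (hgen : ∀ x : Fin n → ℤ, ∑ i, a i * x i = 0 → ∃ k, x = C.mulVec k) :
    ∀ i, Associated (Finset.univ.gcd (fun j => C i j))
      ((Finset.univ.erase i).gcd a) := by
  intro i
  set g := (Finset.univ.erase i).gcd a with hg
  set d := Finset.univ.gcd (fun j => C i j) with hd
  -- coprimality of g and a i
  have hins : GCDMonoid.gcd (a i) g = 1 := by
    rw [hg, ← Finset.gcd_insert, Finset.insert_erase (Finset.mem_univ i), hgcd]
  have hcop : IsCoprime g (a i) := by
    have : Int.gcd (a i) g = 1 := by
      have h := (Int.coe_gcd (a i) g).trans hins; exact_mod_cast h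
    exact (Int.isCoprime_iff_gcd_eq_one.mpr this).symm
  -- g divides the i-th coordinate of every solution
  have hdvd_sol : ∀ x : Fin n → ℤ, ∑ j, a j * x j = 0 → g ∣ x i := by
    intro x hx
    have hsplit : a i * x i + ∑ j ∈ Finset.univ.erase i, a j * x j = 0 := by
      rw [Finset.add_sum_erase Finset.univ (fun j => a j * x j) (Finset.mem_univ i)]
      exact hx
    have h1 : g ∣ ∑ j ∈ Finset.univ.erase i, a j * x j :=
      Finset.dvd_sum fun j hj => (Finset.gcd_dvd hj).mul_right _
    have h2 : g ∣ a i * x i := by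
      have : a i * x i = -∑ j ∈ Finset.univ.erase i, a j * x j := by linarith
      rw [this]; exact h1.neg_right
    exact hcop.dvd_of_dvd_mul_left h2
  -- g ∣ d
  have hgd : g ∣ d := by
    refine Finset.dvd_gcd fun j _ => ?_
    have := hdvd_sol (C.mulVec (Pi.single j 1)) (hsol _)
    simpa [Matrix.mulVec, dotProduct, Pi.single_apply, mul_ite,
      Finset.sum_ite_eq'] using this
  -- d ∣ g : construct a solution with i-th coordinate g
  have hdg : d ∣ g := by
    obtain ⟨c, hc⟩ := exists_gcd_sum (Finset.univ.erase i) a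
    have hcg : ∑ j ∈ Finset.univ.erase i, c j * a j = g := by rw [hg]; exact hc.symm
    set x : Fin n → ℤ := fun j => if j = i then g else -(a i) * c j with hx
    have hsum : ∑ j, a j * x j = 0 := by
      rw [← Finset.add_sum_erase Finset.univ (fun j => a j * x j) (Finset.mem_univ i)]
      have h3 : ∑ j ∈ Finset.univ.erase i, a j * x j
          = -(a i) * ∑ j ∈ Finset.univ.erase i, c j * a j := by
        rw [Finset.mul_sum]
        refine Finset.sum_congr rfl fun j hj => ?_
        have hji : j ≠ i := Finset.ne_of_mem_erase hj
        simp only [hx, if_neg hji]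
        ring
      rw [h3, hcg]
      simp [hx]
    obtain ⟨k, hk⟩ := hgen x hsum
    have hxi : x i = g := by simp [hx]
    have hdvd : d ∣ x i := by
      rw [hk]
      show d ∣ ∑ l, C i l * k l
      exact Finset.dvd_sum fun l _ =>
        Dvd.dvd.mul_right (Finset.gcd_dvd (Finset.mem_univ l)) _
    rwa [hxi] at hdvd
  exact associated_of_dvd_dvd hdg hgd
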